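/- The number of nonempty subsets S of the multiset of 40 numerical cards (four copies each of the values 1 through 10) such that the values in S sum to 11 is 2764, where cards of the same value but different suits are distinguished. -/

import Mathlib

open Finset


section
variable {α β : Type*} [Fintype α] [Fintype β] [DecidableEq α] [DecidableEq β]

/-- fiber function of a subset of a product -/
def fibFun (S : Finset (α × β)) : α → Finset β :=
  fun a => univ.filter (fun b => (a, b) ∈ S)

lemma fibFun_bij (P : (α → Finset β) → Prop) [DecidablePred P] :
    ((univ : Finset (Finset (α × β))).filter (fun S => P (fibFun S))).card
      = ((univ : Finset (α → Finset β)).filter P).card := by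
  apply Finset.card_bij (fun S _ => fibFun S)
  · intro S hS
    simp only [mem_filter, mem_univ, true_and] at hS ⊢
    exact hS
  · intro S hS T hT h
    ext ⟨a, b⟩
    have := congrFun h a
    rw [Finset.ext_iff] at this
    have := this b
    simpa [fibFun] using this
  · intro f hf
    refine ⟨univ.filter (fun c => c.2 ∈ f c.1), ?_, ?_⟩
    · simp only [mem_filter, mem_univ, true_and] at hf ⊢
      convert hf using 2
      funext a; ext b; simp [fibFun]
    · funext a; ext b; simp [fibFun]

lemma card_fibFun (S : Finset (α × β)) (a : α) :
    (fibFun S a).card = (S.filter (fun c => c.1 = a)).card := by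
  have himg : S.filter (fun c => c.1 = a) = (fibFun S a).image (fun b => (a, b)) := by
    ext ⟨a', b⟩
    simp only [mem_filter, mem_image, fibFun, mem_univ, true_and, Prod.mk.injEq]
    constructor
    · rintro ⟨h1, rfl⟩; exact ⟨b, h1, rfl, rfl⟩
    · rintro ⟨b', h1, rfl, rfl⟩; exact ⟨h1, rfl⟩
  rw [himg, Finset.card_image_of_injective _ (fun x y h => congrArg Prod.snd h)]

lemma sum_weight (S : Finset (α × β)) (w : α → ℕ) :
    ∑ c ∈ S, w c.1 = ∑ a, w a * (fibFun S a).card := by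
  rw [← Finset.sum_fiberwise_of_maps_to (g := fun c : α × β => c.1)
    (fun c _ => mem_univ _) (fun c => w c.1)]
  refine Finset.sum_congr rfl (fun a _ => ?_)
  rw [card_fibFun]
  have h1 : ∑ c ∈ S.filter (fun c => c.1 = a), w c.1
      = ∑ _c ∈ S.filter (fun c => c.1 = a), w a :=
    Finset.sum_congr rfl (fun c hc => by simp only [mem_filter] at hc; rw [hc.2])
  rw [h1, Finset.sum_const, smul_eq_mul, mul_comm]

end


lemma pi_count :
    ((univ : Finset (Fin 10 → Finset (Fin 4))).filter
        (fun f => ∑ v, (v.1 + 1) * (f v).card = 11)).card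
      = ∑ g ∈ Fintype.piFinset (fun v : Fin 10 => Finset.range (min 5 (11 / (v.1 + 1) + 1))),
          if ∑ v, (v.1 + 1) * g v = 11 then ∏ v, Nat.choose 4 (g v) else 0 := by
  rw [Finset.card_eq_sum_card_fiberwise
    (f := fun f v => (f v).card)
    (t := Fintype.piFinset (fun v : Fin 10 => Finset.range (min 5 (11 / (v.1 + 1) + 1))))]
  · refine Finset.sum_congr rfl (fun g _ => ?_)
    by_cases h : ∑ v, (v.1 + 1) * g v = 11
    · rw [if_pos h]
      have : ((univ : Finset (Fin 10 → Finset (Fin 4))).filter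
          (fun f => ∑ v, (v.1 + 1) * (f v).card = 11)).filter
            (fun f => (fun v => (f v).card) = g)
          = Fintype.piFinset (fun v : Fin 10 => (univ : Finset (Fin 4)).powersetCard (g v)) := by
        ext f
        simp only [mem_filter, mem_univ, true_and, Fintype.mem_piFinset,
          Finset.mem_powersetCard_univ, funext_iff]
        constructor
        · rintro ⟨-, h2⟩; exact h2
        · intro h2
          refine ⟨?_, h2⟩
          rw [Finset.sum_congr rfl (fun v _ => by rw [h2 v])]
          exact h
      rw [this, Fintype.card_piFinset]
      refine Finset.prod_congr rfl (fun v _ => ?_)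
      rw [Finset.card_powersetCard, Finset.card_univ, Fintype.card_fin]
    · rw [if_neg h]
      rw [Finset.card_eq_zero, Finset.filter_eq_empty_iff]
      intro f hf
      simp only [mem_filter, mem_univ, true_and] at hf
      intro hfg
      apply h
      rw [← hf]
      exact (Finset.sum_congr rfl (fun v _ => by rw [← congrFun hfg v])).symm
  · intro f hf
    simp only [Finset.mem_coe, mem_filter, mem_univ, true_and] at hf ⊢
    rw [Fintype.mem_piFinset]
    intro v
    rw [Finset.mem_range, lt_min_iff]
    have hc4 : (f v).card ≤ 4 := by
      have := Finset.card_le_univ (f v)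
      simpa using this
    constructor
    · omega
    · have hle : (v.1 + 1) * (f v).card ≤ 11 := by
        rw [← hf]
        exact Finset.single_le_sum (f := fun v => (v.1 + 1) * (f v).card)
          (fun _ _ => Nat.zero_le _) (mem_univ v)
      have : (f v).card ≤ 11 / (v.1 + 1) := Nat.le_div_iff_mul_le (Nat.succ_pos _) |>.2
        (by rwa [mul_comm])
      omega


lemma sum_piFinset_succ {n : ℕ} (B : Fin (n + 1) → Finset ℕ)
    (F : (Fin (n + 1) → ℕ) → ℕ) :
    ∑ g ∈ Fintype.piFinset B, F g
      = ∑ x ∈ B 0, ∑ g ∈ Fintype.piFinset (fun i : Fin n => B i.succ), F (Fin.cons x g) := by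
  have h := Finset.filter_piFinset_eq_map_consEquiv (α := fun _ : Fin (n + 1) => ℕ)
    (S := B) (fun _ => True)
  simp only [Finset.filter_true] at h
  rw [h, Finset.sum_map, Finset.sum_product]
  rfl

lemma sum_piFinset_zero (B : Fin 0 → Finset ℕ) (F : (Fin 0 → ℕ) → ℕ) :
    ∑ g ∈ Fintype.piFinset B, F g = F (fun i => i.elim0) := by
  rw [Fintype.piFinset_of_isEmpty, Fintype.sum_unique]
  exact congrArg F (funext fun i => i.elim0)

set_option maxHeartbeats 4000000 in
set_option maxRecDepth 10000 in
lemma num_eval :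
    (∑ g ∈ Fintype.piFinset (fun v : Fin 10 => Finset.range (min 5 (11 / (v.1 + 1) + 1))),
          if ∑ v, (v.1 + 1) * g v = 11 then ∏ v, Nat.choose 4 (g v) else 0) = 2764 := by
  simp only [sum_piFinset_succ, sum_piFinset_zero, Fin.sum_univ_succ, Fin.prod_univ_succ,
    Fin.cons_zero, Fin.cons_succ, Finset.sum_empty, Finset.prod_empty, Fin.sum_univ_zero,
    Fin.prod_univ_zero]
  decide




/-- The number of nonempty subsets of the 40 distinguishable numerical cards
(values 1..10, four suits each) whose values sum to 11 is 2764. -/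
theorem stmt_3 :
    ((Finset.univ : Finset (Finset (Fin 10 × Fin 4))).filter
      (fun S => S.Nonempty ∧ ∑ c ∈ S, (c.1.val + 1) = 11)).card = 2764 := by
  have h1 : ((univ : Finset (Finset (Fin 10 × Fin 4))).filter
      (fun S => S.Nonempty ∧ ∑ c ∈ S, (c.1.val + 1) = 11))
      = ((univ : Finset (Finset (Fin 10 × Fin 4))).filter
      (fun S => ∑ v : Fin 10, (v.1 + 1) * (fibFun S v).card = 11)) := by
    refine Finset.filter_congr (fun S _ => ?_)
    have hw := sum_weight S (fun v : Fin 10 => v.1 + 1)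
    constructor
    · rintro ⟨-, h⟩; rw [← hw]; exact h
    · intro h
      refine ⟨?_, by rw [hw]; exact h⟩
      rcases S.eq_empty_or_nonempty with rfl | hS
      · rw [hw] at *; simp [fibFun] at h
      · exact hS
  rw [h1, fibFun_bij (fun f => ∑ v : Fin 10, (v.1 + 1) * (f v).card = 11), pi_count, num_eval]
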